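/- Fix τ > 0 and codewords c_1, …, c_K ∈ ℝ^C. For any two latent vectors z_1, z_2 ∈ ℝ^C and each index k, the Gibbs soft-assignment component satisfies |p_k(z_1; τ) − p_k(z_2; τ)| ≤ (2/τ) ‖z_1 − z_2‖₂. -/

import Mathlib

/-- Gibbs soft assignment: `p k (z; τ) = exp(-‖z - c k‖/τ) / ∑ j exp(-‖z - c j‖/τ)`. -/
noncomputable def gibbs {C K : ℕ} (c : Fin K → EuclideanSpace ℝ (Fin C))
    (τ : ℝ) (z : EuclideanSpace ℝ (Fin C)) (k : Fin K) : ℝ :=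
  Real.exp (-dist z (c k) / τ) / ∑ j, Real.exp (-dist z (c j) / τ)

/-- `sinh t ≤ t * cosh t` for `t ≥ 0`. -/
lemma sinh_le_mul_cosh {t : ℝ} (ht : 0 ≤ t) : Real.sinh t ≤ t * Real.cosh t := by
  have key : ∀ x : ℝ, HasDerivAt (fun s => s * Real.cosh s - Real.sinh s)
      (x * Real.sinh x) x := by
    intro x
    have h1 : HasDerivAt (fun s => s * Real.cosh s - Real.sinh s)
        (1 * Real.cosh x + x * Real.sinh x - Real.cosh x) x :=
      ((hasDerivAt_id x).mul (Real.hasDerivAt_cosh x)).sub (Real.hasDerivAt_sinh x)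
    convert h1 using 1
    ring
  have hsinh_nonneg : ∀ x : ℝ, 0 ≤ x → 0 ≤ Real.sinh x := by
    intro x hx
    have := Real.sinh_lt_sinh.2 (lt_of_lt_of_le (by norm_num : (-1:ℝ) < 0) hx)
    rcases eq_or_lt_of_le hx with h | h
    · simp [← h]
    · exact (Real.sinh_pos_iff.2 h).le
  have mono : MonotoneOn (fun s => s * Real.cosh s - Real.sinh s) (Set.Ici (0:ℝ)) := by
    apply monotoneOn_of_deriv_nonneg (convex_Ici 0)
    · exact (Continuous.sub (continuous_id.mul Real.continuous_cosh)
        Real.continuous_sinh).continuousOn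
    · intro x _
      exact (key x).differentiableAt.differentiableWithinAt
    · intro x hx
      rw [(key x).deriv]
      rw [interior_Ici] at hx
      exact mul_nonneg (le_of_lt hx) (hsinh_nonneg x (le_of_lt hx))
  have h0 : (0:ℝ) ∈ Set.Ici (0:ℝ) := Set.mem_Ici.2 le_rfl
  have := mono h0 (Set.mem_Ici.2 ht) ht
  simp only [zero_mul, Real.sinh_zero, sub_zero, zero_sub] at this
  linarith

/-- `|e^x - e^y| ≤ (|x - y| / 2) (e^x + e^y)`. -/
lemma abs_exp_sub_exp_le (x y : ℝ) :
    |Real.exp x - Real.exp y| ≤ (|x - y| / 2) * (Real.exp x + Real.exp y) := by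
  wlog hxy : y ≤ x generalizing x y
  · have := this y x (le_of_not_ge hxy)
    rw [abs_sub_comm, abs_sub_comm y x] at this
    linarith [this]
  set t : ℝ := (x - y) / 2 with htdef
  have ht : 0 ≤ t := by rw [htdef]; linarith
  have habs : |x - y| = 2 * t := by
    rw [abs_of_nonneg (by linarith : (0:ℝ) ≤ x - y), htdef]; ring
  have hsinh := sinh_le_mul_cosh ht
  rw [Real.sinh_eq, Real.cosh_eq] at hsinh
  have hex : Real.exp x = Real.exp ((x + y) / 2) * Real.exp t := by
    rw [← Real.exp_add]; congr 1; rw [htdef]; ring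
  have hey : Real.exp y = Real.exp ((x + y) / 2) * Real.exp (-t) := by
    rw [← Real.exp_add]; congr 1; rw [htdef]; ring
  have hm : (0:ℝ) < Real.exp ((x + y) / 2) := Real.exp_pos _
  have hge : Real.exp y ≤ Real.exp x := Real.exp_le_exp.2 hxy
  rw [abs_of_nonneg (by linarith : (0:ℝ) ≤ Real.exp x - Real.exp y), habs, hex, hey]
  have hcore : Real.exp t - Real.exp (-t) ≤ t * (Real.exp t + Real.exp (-t)) := by
    nlinarith [hsinh]
  nlinarith [hm, hcore]

/-- **Componentwise Lipschitz continuity in `z`.** For any two latents `z₁, z₂` and any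
index `k`, `|pₖ(z₁; τ) - pₖ(z₂; τ)| ≤ (2/τ) ‖z₁ - z₂‖`. -/
theorem gibbs_component_lipschitz {C K : ℕ}
    (τ : ℝ) (hτ : 0 < τ)
    (c : Fin K → EuclideanSpace ℝ (Fin C))
    (z₁ z₂ : EuclideanSpace ℝ (Fin C)) (k : Fin K) :
    |gibbs c τ z₁ k - gibbs c τ z₂ k| ≤ (2 / τ) * dist z₁ z₂ := by
  classical
  set d : ℝ := dist z₁ z₂ with hd
  have hd0 : 0 ≤ d := dist_nonneg
  set F : Fin K → ℝ := fun j => Real.exp (-dist z₁ (c j) / τ) with hF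
  set G : Fin K → ℝ := fun j => Real.exp (-dist z₂ (c j) / τ) with hG
  set S : ℝ := ∑ j, F j with hS
  set T : ℝ := ∑ j, G j with hT
  have hFpos : ∀ j, 0 < F j := fun j => Real.exp_pos _
  have hGpos : ∀ j, 0 < G j := fun j => Real.exp_pos _
  have hSpos : 0 < S := Finset.sum_pos (fun j _ => hFpos j) ⟨k, Finset.mem_univ k⟩
  have hTpos : 0 < T := Finset.sum_pos (fun j _ => hGpos j) ⟨k, Finset.mem_univ k⟩
  have hFk_le : F k ≤ S := Finset.single_le_sum (fun j _ => (hFpos j).le) (Finset.mem_univ k)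
  have hGk_le : G k ≤ T := Finset.single_le_sum (fun j _ => (hGpos j).le) (Finset.mem_univ k)
  have hdist : ∀ j : Fin K, |dist z₁ (c j) - dist z₂ (c j)| ≤ d :=
    fun j => abs_dist_sub_le z₁ z₂ (c j)
  -- per-term bound
  have hterm : ∀ j : Fin K,
      |F k * G j - G k * F j| ≤ (d / τ) * (F k * G j + G k * F j) := by
    intro j
    have hFG : F k * G j = Real.exp (-dist z₁ (c k) / τ + -dist z₂ (c j) / τ) := by
      rw [Real.exp_add]
    have hGF : G k * F j = Real.exp (-dist z₂ (c k) / τ + -dist z₁ (c j) / τ) := by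
      rw [Real.exp_add]
    rw [hFG, hGF]
    refine le_trans (abs_exp_sub_exp_le _ _) ?_
    have habs : |(-dist z₁ (c k) / τ + -dist z₂ (c j) / τ) -
        (-dist z₂ (c k) / τ + -dist z₁ (c j) / τ)| ≤ 2 * d / τ := by
      have h1 := hdist k
      have h2 := hdist j
      have heq : (-dist z₁ (c k) / τ + -dist z₂ (c j) / τ) -
          (-dist z₂ (c k) / τ + -dist z₁ (c j) / τ) =
          ((dist z₂ (c k) - dist z₁ (c k)) + (dist z₁ (c j) - dist z₂ (c j))) / τ := by
        ring
      rw [heq, abs_div, abs_of_pos hτ]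
      gcongr
      calc |(dist z₂ (c k) - dist z₁ (c k)) + (dist z₁ (c j) - dist z₂ (c j))|
          ≤ |dist z₂ (c k) - dist z₁ (c k)| + |dist z₁ (c j) - dist z₂ (c j)| := abs_add_le _ _
        _ ≤ d + d := by
            rw [abs_sub_comm] at h1
            exact add_le_add h1 h2
        _ = 2 * d := by ring
    have hpos : (0:ℝ) ≤ Real.exp (-dist z₁ (c k) / τ + -dist z₂ (c j) / τ) +
        Real.exp (-dist z₂ (c k) / τ + -dist z₁ (c j) / τ) := by positivity
    have hhalf : |(-dist z₁ (c k) / τ + -dist z₂ (c j) / τ) -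
        (-dist z₂ (c k) / τ + -dist z₁ (c j) / τ)| / 2 ≤ d / τ := by
      rw [div_le_iff₀ (by norm_num : (0:ℝ) < 2)]
      calc _ ≤ 2 * d / τ := habs
        _ = d / τ * 2 := by ring
    exact mul_le_mul_of_nonneg_right hhalf hpos
  -- main computation
  have hgibbs : gibbs c τ z₁ k - gibbs c τ z₂ k =
      (∑ j, (F k * G j - G k * F j)) / (S * T) := by
    show F k / S - G k / T = _
    rw [div_sub_div _ _ (ne_of_gt hSpos) (ne_of_gt hTpos)]
    congr 1
    rw [Finset.sum_sub_distrib, ← Finset.mul_sum, ← Finset.mul_sum, hS, hT]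
    ring
  rw [hgibbs, abs_div, abs_of_pos (mul_pos hSpos hTpos)]
  have hsum : |∑ j, (F k * G j - G k * F j)| ≤ (d / τ) * (F k * T + G k * S) := by
    refine le_trans (Finset.abs_sum_le_sum_abs _ _) ?_
    calc ∑ j, |F k * G j - G k * F j|
        ≤ ∑ j, (d / τ) * (F k * G j + G k * F j) :=
          Finset.sum_le_sum (fun j _ => hterm j)
      _ = (d / τ) * (F k * T + G k * S) := by
          rw [← Finset.mul_sum, Finset.sum_add_distrib, ← Finset.mul_sum, ← Finset.mul_sum]
  rw [div_le_iff₀ (mul_pos hSpos hTpos)]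
  refine le_trans hsum ?_
  have h1 : F k * T + G k * S ≤ S * T + T * S := by
    have ha := mul_le_mul_of_nonneg_right hFk_le hTpos.le
    have hb := mul_le_mul_of_nonneg_right hGk_le hSpos.le
    nlinarith
  have hdτ : 0 ≤ d / τ := div_nonneg hd0 hτ.le
  calc (d / τ) * (F k * T + G k * S) ≤ (d / τ) * (S * T + T * S) :=
        mul_le_mul_of_nonneg_left h1 hdτ
    _ = 2 / τ * d * (S * T) := by ring
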